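/- arXiv:0801.4628 — 2 statements merged into one kernel-verified Lean document; each statement's English description precedes it below -/
import Mathlib

section
/- Let X be a set equipped with two topologies τ_S (finer) and τ_W (coarser) such that every τ_S-open set is a countable intersection of τ_W-open sets. Then every subset of X that is residual with respect to τ_S is also residual with respect to τ_W. -/
/-- If `τS` is finer than `τW` and every `τS`-open set is a countable intersection of
`τW`-open sets, then every `τS`-residual set is `τW`-residual. -/
theorem sp_residual_implies_wp_residual {X : Type*} (τS τW : TopologicalSpace X)
    (hfine : τS ≤ τW)
    (h : ∀ U : Set X, @IsOpen X τS U →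
      ∃ f : ℕ → Set X, (∀ n, @IsOpen X τW (f n)) ∧ U = ⋂ n, f n)
    (A : Set X) (hA : A ∈ @residual X τS) : A ∈ @residual X τW := by
  rw [@mem_residual_iff X τS] at hA
  obtain ⟨S, hSo, hSd, hSc, hSA⟩ := hA
  letI := τW
  have key : ∀ t ∈ S, t ∈ residual X := by
    intro t ht
    obtain ⟨f, hf, hfe⟩ := h t (hSo t ht)
    rw [hfe]
    refine countable_iInter_mem.mpr fun n => residual_of_dense_open (hf n) ?_
    rw [dense_iff_inter_open]
    intro U hU hUne
    have hUS : @IsOpen X τS U := hfine U hU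
    obtain ⟨x, hxU, hxt⟩ := (@dense_iff_inter_open X τS t).mp (hSd t ht) U hUS hUne
    exact ⟨x, hxU, Set.mem_iInter.mp (hfe ▸ hxt) n⟩
  have hmem : ⋂₀ S ∈ residual X := by
    rw [Set.sInter_eq_biInter]
    exact (countable_bInter_mem hSc).mpr key
  exact Filter.mem_of_superset hmem hSA
end

section
/- Let X be a topological space, M, M' disjoint-union-decomposed via an open U ⊆ M, and let φ, ψ : M → M' be continuous maps that agree on the closed set M \ U. Suppose further that the combination H(ψ') of ψ' and φ|_{M\U} is well defined for ψ' in some neighborhood of φ|_U. Then the combined map (equal to ψ' on U and to φ on M \ U) is continuous whenever ψ' → φ|_U appropriately near the frontier of U; concretely: if {V_k} is an open cover of U with closure(V_k) ⊆ V_{k+1}, and ψ' agrees with φ outside every V_k beyond some index in the sense of uniform closeness conditions ε_i = 1/min{k : K_i ⊆ V_k} on a locally finite cover {K_i} of U, then the combination is continuous on M. -/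
/-- Gluing lemma: let `U ⊆ M` be open, exhausted by open sets `V k` with
`closure (V k) ⊆ V (k+1)`, let `φ : M → M'` be continuous and `ψ : M → M'` continuous
on `U`.  If `ψ` is `1/(k+1)`-close to `φ` on `U \ V k` for every `k` (closeness
tolerance shrinking near the frontier of `U`), then the combination, equal to `ψ` on
`U` and to `φ` on `M \ U`, is continuous on `M`. -/
theorem continuous_combination_of_close_near_frontier
    {M M' : Type*} [TopologicalSpace M] [MetricSpace M']
    (U : Set M) (hU : IsOpen U) [DecidablePred (· ∈ U)]
    (V : ℕ → Set M) (hVopen : ∀ k, IsOpen (V k))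
    (hVsub : ∀ k, closure (V k) ⊆ V (k + 1)) (hVcover : ⋃ k, V k = U)
    (φ ψ : M → M') (hφ : Continuous φ) (hψ : ContinuousOn ψ U)
    (hclose : ∀ k, ∀ x ∈ U \ V k, dist (ψ x) (φ x) ≤ 1 / (k + 1)) :
    Continuous (U.piecewise ψ φ) := by
  have hVU : ∀ k, V k ⊆ U := fun k => hVcover ▸ Set.subset_iUnion V k
  rw [continuous_iff_continuousAt]
  intro x
  by_cases hx : x ∈ U
  · have h1 : ContinuousAt ψ x := hψ.continuousAt (hU.mem_nhds hx)
    refine h1.congr ?_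
    filter_upwards [hU.mem_nhds hx] with y hy
    simp [Set.piecewise, hy]
  · have hpx : U.piecewise ψ φ x = φ x := by simp [Set.piecewise, hx]
    rw [ContinuousAt, hpx, Metric.tendsto_nhds]
    intro ε hε
    obtain ⟨k, hk⟩ : ∃ k : ℕ, 1 / ((k : ℝ) + 1) < ε / 2 := by
      obtain ⟨k, hk⟩ := exists_nat_gt (2 / ε)
      refine ⟨k, ?_⟩
      rw [div_lt_iff₀ (by positivity : (0:ℝ) < (k:ℝ)+1)]
      rw [div_lt_iff₀ hε] at hk
      nlinarith
    have hxV : x ∉ closure (V k) := fun h => hx (hVU (k + 1) (hVsub k h))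
    have h1 : ∀ᶠ y in nhds x, y ∉ closure (V k) :=
      (isOpen_compl_iff.mpr isClosed_closure).mem_nhds hxV
    have h2 : ∀ᶠ y in nhds x, dist (φ y) (φ x) < ε / 2 :=
      Metric.tendsto_nhds.mp (hφ.continuousAt (x := x)) (ε / 2) (by linarith)
    filter_upwards [h1, h2] with y hy1 hy2
    by_cases hyU : y ∈ U
    · have : dist (ψ y) (φ y) ≤ 1 / (k + 1) :=
        hclose k y ⟨hyU, fun h => hy1 (subset_closure h)⟩
      calc dist (U.piecewise ψ φ y) (φ x) = dist (ψ y) (φ x) := by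
              simp [Set.piecewise, hyU]
        _ ≤ dist (ψ y) (φ y) + dist (φ y) (φ x) := dist_triangle _ _ _
        _ < ε := by linarith
    · calc dist (U.piecewise ψ φ y) (φ x) = dist (φ y) (φ x) := by
              simp [Set.piecewise, hyU]
        _ < ε := by linarith
end
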